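/- The ℚ[q]-linear map Φ: 𝔸^d_q(Λ) → ℋ^d_q sending a partition λ of length n to M_λ(x_1,...,x_n) = ∑_{σ∈S_n} x_{σ(1)}^{λ_1}···x_{σ(n)}^{λ_n} is an algebra isomorphism; in particular, for partitions μ of length n and ν of length k, M_μ * M_ν = ∑_{a∈ℕ^n, b∈ℕ^k} c_{n,k}^{a,b} · M_{(μ+a, ν+b)_≤}, where * is the quantized shuffle product on ℋ^d_q. -/

import Mathlib

open MvPolynomial Finset

noncomputable section

/-- The quantization variable `q` in `ℚ[q]`. -/
def qv : Polynomial ℚ := Polynomial.X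

/-- `M_λ(x_1,…,x_n) = ∑_{σ ∈ S_n} x_{σ(1)}^{λ_1} ⋯ x_{σ(n)}^{λ_n}`, with
coefficients in `ℚ[q]`. -/
def Msym {n : ℕ} (lam : Fin n → ℕ) : MvPolynomial (Fin n) (Polynomial ℚ) :=
  ∑ σ : Equiv.Perm (Fin n), ∏ i : Fin n, X (σ i) ^ lam i

/-- The shuffle product of `ℋ^d_q`:
`(f₁ * f₂)(x_1,…,x_{n₁+n₂}) = ∑_I f₁(x_I) f₂(x_J) ∏_{j∈J, i∈I} (x_j − q x_i)^{d−1}`. -/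
def shuffle (d n₁ n₂ : ℕ) (f₁ : MvPolynomial (Fin n₁) (Polynomial ℚ))
    (f₂ : MvPolynomial (Fin n₂) (Polynomial ℚ)) :
    MvPolynomial (Fin (n₁ + n₂)) (Polynomial ℚ) :=
  ∑ I ∈ ((Finset.univ : Finset (Fin (n₁ + n₂))).powersetCard n₁).attach,
    have hI : I.1.card = n₁ := (Finset.mem_powersetCard.mp I.2).2
    have hJ : I.1ᶜ.card = n₂ := by
      have h := Finset.card_compl I.1
      rw [hI] at h
      simp only [Fintype.card_fin] at h
      omega
    rename (⇑(I.1.orderEmbOfFin hI)) f₁ * rename (⇑(I.1ᶜ.orderEmbOfFin hJ)) f₂ *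
      ∏ j ∈ I.1ᶜ, ∏ i ∈ I.1, (X j - C qv * X i) ^ (d - 1)

/-- The kernel polynomial `g_{n,k} = ∏_{s=n+1}^{n+k} ∏_{t=1}^{n} (x_s − q x_t)^{d−1}`,
with variables indexed by `Fin (n+k)`; its coefficients are the `c_{n,k}^{a,b}`. -/
def gFin (d n k : ℕ) : MvPolynomial (Fin (n + k)) (Polynomial ℚ) :=
  ∏ j : Fin k, ∏ i : Fin n,
    (X (Fin.natAdd n j) - C qv * X (Fin.castAdd k i)) ^ (d - 1)

/-- The linear map `Φ` on the degree-`n` component, sending a partition `λ` of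
length `n` to `M_λ`. -/
def Phi (n : ℕ) :
    ({v : Fin n → ℕ // Monotone v} →₀ Polynomial ℚ) →ₗ[Polynomial ℚ]
      MvPolynomial (Fin n) (Polynomial ℚ) :=
  Finsupp.linearCombination (Polynomial ℚ) (fun lam : {v : Fin n → ℕ // Monotone v} => Msym lam.1)

lemma prod_X_pow_fin {m : ℕ} (w : Fin m → ℕ) :
    (∏ j : Fin m, (X j : MvPolynomial (Fin m) (Polynomial ℚ)) ^ w j)
      = monomial (Finsupp.equivFunOnFinite.symm w) 1 := by
  rw [← prod_X_pow_eq_monomial]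
  refine (Finset.prod_subset (Finset.subset_univ _) ?_).symm
  intro x _ hx
  have : (Finsupp.equivFunOnFinite.symm w) x = 0 := by
    simpa [Finsupp.mem_support_iff] using hx
  simp only [Finsupp.equivFunOnFinite_symm_apply_apply] at this ⊢
  simp [this]

lemma Msym_eq_sum_monomial {n : ℕ} (lam : Fin n → ℕ) :
    Msym lam = ∑ σ : Equiv.Perm (Fin n),
      monomial (Finsupp.equivFunOnFinite.symm (lam ∘ ⇑σ⁻¹)) (1 : Polynomial ℚ) := by
  unfold Msym
  refine Finset.sum_congr rfl fun σ _ => ?_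
  rw [← prod_X_pow_fin]
  rw [← Equiv.prod_comp σ (fun j => (X j : MvPolynomial (Fin n) (Polynomial ℚ)) ^ (lam ∘ ⇑σ⁻¹) j)]
  simp

lemma coeff_Msym {n : ℕ} (lam : Fin n → ℕ) (e : Fin n →₀ ℕ) :
    coeff e (Msym lam) =
      ((Finset.univ.filter fun σ : Equiv.Perm (Fin n) => ⇑e ∘ ⇑σ = lam).card : Polynomial ℚ) := by
  rw [Msym_eq_sum_monomial, MvPolynomial.coeff_sum]
  simp only [coeff_monomial]
  rw [Finset.sum_boole]
  congr 2
  apply Finset.filter_congr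
  intro σ _
  constructor
  · intro h
    funext i
    have : e (σ i) = (Finsupp.equivFunOnFinite.symm (lam ∘ ⇑σ⁻¹)) (σ i) := by rw [h]
    simpa using this
  · intro h
    ext x
    have : e (σ (σ⁻¹ x)) = lam (σ⁻¹ x) := congrFun h (σ⁻¹ x)
    simpa using this.symm

-- Msym is invariant under precomposition with a permutation
lemma Msym_comp_perm {n : ℕ} (w : Fin n → ℕ) (ρ : Equiv.Perm (Fin n)) :
    Msym (w ∘ ⇑ρ) = Msym w := by
  unfold Msym
  rw [← Equiv.sum_comp (Equiv.mulRight ρ⁻¹)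
    (fun σ : Equiv.Perm (Fin n) => ∏ i : Fin n, (X (σ i) : MvPolynomial (Fin n) (Polynomial ℚ)) ^ w i)]
  refine Finset.sum_congr rfl fun σ _ => ?_
  have h := Equiv.prod_comp ρ (fun i => (X (σ (ρ⁻¹ i)) : MvPolynomial (Fin n) (Polynomial ℚ)) ^ w i)
  simp only [Equiv.Perm.coe_inv, Equiv.symm_apply_apply] at h
  simpa [Function.comp, Equiv.Perm.mul_apply] using h


lemma Msym_isSymmetric {n : ℕ} (lam : Fin n → ℕ) : (Msym lam).IsSymmetric := by
  intro π
  unfold Msym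
  rw [map_sum]
  rw [← Equiv.sum_comp (Equiv.mulLeft π)
    (fun σ : Equiv.Perm (Fin n) => ∏ i : Fin n, (X (σ i) : MvPolynomial (Fin n) (Polynomial ℚ)) ^ lam i)]
  refine Finset.sum_congr rfl fun σ _ => ?_
  rw [map_prod]
  simp [Equiv.Perm.mul_apply]

-- monotone rearrangement uniqueness
lemma mono_comp_eq {n : ℕ} {lam mu : Fin n → ℕ} (hl : Monotone lam) (hm : Monotone mu)
    (σ : Equiv.Perm (Fin n)) (h : lam ∘ ⇑σ = mu) : mu = lam := by
  have := Tuple.unique_monotone (f := lam) (σ := σ) (τ := 1) (by rw [h]; exact hm) (by simpa using hl)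
  simp only [Equiv.Perm.coe_one, Function.comp_id] at this
  rw [← h, this]

lemma Phi_injective (n : ℕ) : Function.Injective (Phi n) := by
  intro a b hab
  have h0 : Phi n (a - b) = 0 := by rw [map_sub, hab, sub_self]
  have : a - b = 0 := by
    set f := a - b with hf
    refine Finsupp.ext fun lam => ?_
    have hcoe : ⇑(Finsupp.equivFunOnFinite.symm lam.1) = lam.1 := by ext x; simp
    show f lam = 0
    have hc : coeff (Finsupp.equivFunOnFinite.symm lam.1) (Phi n f) = 0 := by rw [h0]; simp
    rw [Phi, Finsupp.linearCombination_apply, Finsupp.sum] at hc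
    rw [MvPolynomial.coeff_sum] at hc
    simp only [MvPolynomial.coeff_smul, smul_eq_mul] at hc
    rw [Finset.sum_eq_single lam] at hc
    · rcases mul_eq_zero.mp hc with h | h
      · exact h
      · exfalso
        rw [coeff_Msym] at h
        have : (1 : Equiv.Perm (Fin n)) ∈
            (Finset.univ.filter fun σ : Equiv.Perm (Fin n) =>
              ⇑(Finsupp.equivFunOnFinite.symm lam.1) ∘ ⇑σ = lam.1) := by
          simp [hcoe]
        have hcard := Finset.card_ne_zero_of_mem this
        exact hcard (by exact_mod_cast h)
    · intro mu _ hne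
      rw [coeff_Msym]
      convert mul_zero _
      norm_cast
      rw [Finset.card_eq_zero, Finset.filter_eq_empty_iff]
      intro σ _ hσ
      apply hne
      rw [hcoe] at hσ
      exact Subtype.ext (mono_comp_eq lam.2 mu.2 σ hσ)
    · intro hnot
      simp [Finsupp.notMem_support_iff.mp hnot]
  exact sub_eq_zero.mp this


def stab {n : ℕ} (lam : Fin n → ℕ) : ℕ :=
  (Finset.univ.filter fun σ : Equiv.Perm (Fin n) => lam ∘ ⇑σ = lam).card

lemma stab_pos {n : ℕ} (lam : Fin n → ℕ) : 0 < stab lam :=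
  Finset.card_pos.mpr ⟨1, by simp [Function.comp]⟩

lemma card_filter_sort {n : ℕ} (e : Fin n →₀ ℕ) (ρ : Equiv.Perm (Fin n)) :
    (Finset.univ.filter fun σ : Equiv.Perm (Fin n) => ⇑e ∘ ⇑σ = ⇑e ∘ ⇑ρ).card
      = stab (⇑e ∘ ⇑ρ) := by
  unfold stab
  refine Finset.card_nbij' (fun σ => ρ⁻¹ * σ) (fun τ => ρ * τ) ?_ ?_ ?_ ?_
  · intro σ hσ
    simp only [Finset.mem_filter, Finset.mem_univ, true_and, Finset.mem_coe] at *
    funext x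
    have := congrFun hσ x
    simpa using this
  · intro τ hτ
    simp only [Finset.mem_filter, Finset.mem_univ, true_and, Finset.mem_coe] at *
    funext x
    have := congrFun hτ x
    simpa using this
  · intro σ _; simp [mul_assoc, ← mul_assoc]
  · intro τ _; simp [← mul_assoc]

lemma coeff_symm {n : ℕ} {f : MvPolynomial (Fin n) (Polynomial ℚ)} (hf : f.IsSymmetric)
    (e : Fin n →₀ ℕ) (ρ : Equiv.Perm (Fin n)) :
    coeff (Finsupp.equivFunOnFinite.symm (⇑e ∘ ⇑ρ)) f = coeff e f := by
  have key := coeff_rename_mapDomain ⇑ρ ρ.injective f (Finsupp.equivFunOnFinite.symm (⇑e ∘ ⇑ρ))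
  rw [hf ρ] at key
  rw [← key]
  congr 1
  ext x
  rw [Finsupp.mapDomain_equiv_apply (f := ρ)]
  simp

def sortedOf {n : ℕ} (e : Fin n →₀ ℕ) : {v : Fin n → ℕ // Monotone v} :=
  ⟨⇑e ∘ ⇑(Tuple.sort ⇑e), Tuple.monotone_sort ⇑e⟩

lemma Phi_range (n : ℕ) :
    Set.range (Phi n) = {f : MvPolynomial (Fin n) (Polynomial ℚ) | f.IsSymmetric} := by
  apply Set.Subset.antisymm
  · rintro _ ⟨g, rfl⟩
    intro π
    rw [Phi, Finsupp.linearCombination_apply, Finsupp.sum, map_sum]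
    refine Finset.sum_congr rfl fun lam _ => ?_
    rw [AlgHom.map_smul_of_tower, Msym_isSymmetric lam.1 π]
  · intro f hf
    have hfs : f.IsSymmetric := hf
    set g : {v : Fin n → ℕ // Monotone v} →₀ Polynomial ℚ :=
      Finsupp.onFinset (f.support.image sortedOf)
        (fun lam => ((stab lam.1 : ℚ)⁻¹) • coeff (Finsupp.equivFunOnFinite.symm lam.1) f)
        (by
          intro lam hne
          have hc : coeff (Finsupp.equivFunOnFinite.symm lam.1) f ≠ 0 := by
            intro h0; exact hne (by rw [h0, smul_zero])
          have hmem : Finsupp.equivFunOnFinite.symm lam.1 ∈ f.support :=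
            Finsupp.mem_support_iff.mpr hc
          refine Finset.mem_image.mpr ⟨_, hmem, ?_⟩
          have hcoe : ⇑(Finsupp.equivFunOnFinite.symm lam.1) = lam.1 := by ext x; simp
          unfold sortedOf
          refine Subtype.ext ?_
          simp only [hcoe]
          exact mono_comp_eq lam.2 (by rw [hcoe] at *; exact Tuple.monotone_sort lam.1)
            (Tuple.sort lam.1) rfl) with hg
    refine ⟨g, ?_⟩
    apply MvPolynomial.ext
    intro e
    rw [Phi, Finsupp.linearCombination_apply, Finsupp.sum, MvPolynomial.coeff_sum]
    simp only [MvPolynomial.coeff_smul, smul_eq_mul]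
    set lam0 := sortedOf e with hlam0
    rw [Finset.sum_eq_single lam0]
    · have h1 : coeff e (Msym lam0.1) = ((stab lam0.1 : ℕ) : Polynomial ℚ) := by
        rw [coeff_Msym]
        norm_cast
        exact card_filter_sort e (Tuple.sort ⇑e)
      have h2 : g lam0 = ((stab lam0.1 : ℚ)⁻¹) • coeff e f := by
        show ((stab lam0.1 : ℚ)⁻¹) • coeff (Finsupp.equivFunOnFinite.symm lam0.1) f = _
        rw [hlam0]
        show _ • coeff (Finsupp.equivFunOnFinite.symm (⇑e ∘ ⇑(Tuple.sort ⇑e))) f = _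
        rw [coeff_symm hfs e (Tuple.sort ⇑e)]
      rw [h1, h2]
      have hs : ((stab lam0.1 : ℚ)) ≠ 0 := by
        exact_mod_cast (stab_pos lam0.1).ne'
      rw [smul_mul_assoc]
      rw [show ((stab lam0.1 : ℕ) : Polynomial ℚ) = Polynomial.C ((stab lam0.1 : ℚ)) by
        simp]
      rw [mul_comm (coeff e f), ← Polynomial.smul_eq_C_mul, smul_smul, inv_mul_cancel₀ hs,
        one_smul]
    · intro lam _ hne
      rw [coeff_Msym]
      convert mul_zero _
      norm_cast
      rw [Finset.card_eq_zero, Finset.filter_eq_empty_iff]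
      intro σ _ hσ
      apply hne
      have := Tuple.unique_monotone (f := ⇑e) (σ := σ) (τ := Tuple.sort ⇑e)
        (by rw [hσ]; exact lam.2) (Tuple.monotone_sort ⇑e)
      refine Subtype.ext ?_
      rw [← hσ, this]
      rfl
    · intro hnot
      rw [Finsupp.notMem_support_iff.mp hnot, zero_mul]



def blockPerm {n k : ℕ} (σ : Equiv.Perm (Fin n)) (τ : Equiv.Perm (Fin k)) :
    Equiv.Perm (Fin (n + k)) :=
  finSumFinEquiv.symm.trans ((Equiv.sumCongr σ τ).trans finSumFinEquiv)

lemma blockPerm_castAdd {n k : ℕ} (σ : Equiv.Perm (Fin n)) (τ : Equiv.Perm (Fin k)) (i : Fin n) :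
    blockPerm σ τ (Fin.castAdd k i) = Fin.castAdd k (σ i) := by
  simp [blockPerm]

lemma blockPerm_natAdd {n k : ℕ} (σ : Equiv.Perm (Fin n)) (τ : Equiv.Perm (Fin k)) (j : Fin k) :
    blockPerm σ τ (Fin.natAdd n j) = Fin.natAdd n (τ j) := by
  simp [blockPerm]

def mergeFun {n k : ℕ} (I : Finset (Fin (n + k))) (hI : I.card = n) (hJ : Iᶜ.card = k) :
    Fin (n + k) → Fin (n + k) :=
  Fin.append ⇑(I.orderEmbOfFin hI) ⇑(Iᶜ.orderEmbOfFin hJ)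

lemma mergeFun_bijective {n k : ℕ} (I : Finset (Fin (n + k))) (hI : I.card = n)
    (hJ : Iᶜ.card = k) : Function.Bijective (mergeFun I hI hJ) := by
  rw [Fintype.bijective_iff_injective_and_card]
  refine ⟨?_, rfl⟩
  intro a b hab
  unfold mergeFun at hab
  induction a using Fin.addCases with
  | left i =>
    induction b using Fin.addCases with
    | left i' =>
      simp only [Fin.append_left] at hab
      rw [(I.orderEmbOfFin hI).injective hab]
    | right j' =>
      exfalso
      simp only [Fin.append_left, Fin.append_right] at hab
      have h1 := Finset.orderEmbOfFin_mem I hI i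
      have h2 := Finset.orderEmbOfFin_mem Iᶜ hJ j'
      rw [hab] at h1
      exact (Finset.mem_compl.mp h2) h1
  | right j =>
    induction b using Fin.addCases with
    | left i' =>
      exfalso
      simp only [Fin.append_left, Fin.append_right] at hab
      have h1 := Finset.orderEmbOfFin_mem I hI i'
      have h2 := Finset.orderEmbOfFin_mem Iᶜ hJ j
      rw [hab] at h2
      exact (Finset.mem_compl.mp h2) h1
    | right j' =>
      simp only [Fin.append_right] at hab
      rw [(Iᶜ.orderEmbOfFin hJ).injective hab]

def mergePerm {n k : ℕ} (I : Finset (Fin (n + k))) (hI : I.card = n) (hJ : Iᶜ.card = k) :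
    Equiv.Perm (Fin (n + k)) :=
  Equiv.ofBijective _ (mergeFun_bijective I hI hJ)

lemma mergePerm_castAdd {n k : ℕ} (I : Finset (Fin (n + k))) (hI : I.card = n)
    (hJ : Iᶜ.card = k) (i : Fin n) :
    mergePerm I hI hJ (Fin.castAdd k i) = I.orderEmbOfFin hI i := by
  show mergeFun I hI hJ _ = _
  unfold mergeFun
  rw [Fin.append_left]

lemma mergePerm_natAdd {n k : ℕ} (I : Finset (Fin (n + k))) (hI : I.card = n)
    (hJ : Iᶜ.card = k) (j : Fin k) :
    mergePerm I hI hJ (Fin.natAdd n j) = Iᶜ.orderEmbOfFin hJ j := by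
  show mergeFun I hI hJ _ = _
  unfold mergeFun
  rw [Fin.append_right]

abbrev PSetD (n k : ℕ) := {x // x ∈ (Finset.univ : Finset (Fin (n + k))).powersetCard n}

lemma hIof {n k : ℕ} (I : PSetD n k) : I.1.card = n := (Finset.mem_powersetCard.mp I.2).2

lemma hJof {n k : ℕ} (I : PSetD n k) : I.1ᶜ.card = k := by
  have h := Finset.card_compl I.1
  rw [hIof I] at h
  simp only [Fintype.card_fin] at h
  omega

def Theta (n k : ℕ) (dd : PSetD n k × Equiv.Perm (Fin n) × Equiv.Perm (Fin k)) :
    Equiv.Perm (Fin (n + k)) :=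
  (blockPerm dd.2.1 dd.2.2).trans (mergePerm dd.1.1 (hIof dd.1) (hJof dd.1))

lemma Theta_castAdd {n k : ℕ} (dd : PSetD n k × Equiv.Perm (Fin n) × Equiv.Perm (Fin k))
    (i : Fin n) :
    Theta n k dd (Fin.castAdd k i) = dd.1.1.orderEmbOfFin (hIof dd.1) (dd.2.1 i) := by
  simp only [Theta, Equiv.trans_apply, blockPerm_castAdd, mergePerm_castAdd]

lemma Theta_natAdd {n k : ℕ} (dd : PSetD n k × Equiv.Perm (Fin n) × Equiv.Perm (Fin k))
    (j : Fin k) :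
    Theta n k dd (Fin.natAdd n j) = dd.1.1ᶜ.orderEmbOfFin (hJof dd.1) (dd.2.2 j) := by
  simp only [Theta, Equiv.trans_apply, blockPerm_natAdd, mergePerm_natAdd]

lemma Theta_bijective (n k : ℕ) : Function.Bijective (Theta n k) := by
  rw [Fintype.bijective_iff_injective_and_card]
  constructor
  · rintro ⟨I, σ, τ⟩ ⟨I', σ', τ'⟩ h
    have happ : ∀ x, Theta n k (I, σ, τ) x = Theta n k (I', σ', τ') x := fun x => by rw [h]
    have hII : I.1 = I'.1 := by
      refine Finset.eq_of_subset_of_card_le ?_ (by rw [hIof I, hIof I'])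
      intro x hx
      have hxr : x ∈ Set.range ⇑(I.1.orderEmbOfFin (hIof I)) := by
        rw [Finset.range_orderEmbOfFin]; exact hx
      obtain ⟨i, rfl⟩ := hxr
      have h1 := happ (Fin.castAdd k (σ⁻¹ i))
      rw [Theta_castAdd, Theta_castAdd] at h1
      simp only [Equiv.Perm.coe_inv, Equiv.apply_symm_apply] at h1
      rw [h1]
      exact Finset.orderEmbOfFin_mem _ _ _
    obtain ⟨I, hIm⟩ := I
    obtain ⟨I', hIm'⟩ := I'
    simp only at hII
    subst hII
    have hσ : σ = σ' := by
      apply Equiv.ext; intro i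
      have h1 := happ (Fin.castAdd k i)
      rw [Theta_castAdd, Theta_castAdd] at h1
      exact (I.orderEmbOfFin _).injective h1
    have hτ : τ = τ' := by
      apply Equiv.ext; intro j
      have h1 := happ (Fin.natAdd n j)
      rw [Theta_natAdd, Theta_natAdd] at h1
      exact (Iᶜ.orderEmbOfFin _).injective h1
    subst hσ; subst hτ; rfl
  · simp only [Fintype.card_prod, Fintype.card_coe, Finset.card_powersetCard,
      Fintype.card_perm, Fintype.card_fin, Finset.card_univ]
    rw [← Nat.choose_mul_factorial_mul_factorial (Nat.le_add_right n k)]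
    simp [Nat.add_sub_cancel_left, mul_assoc]



-- product over a finset via its order embedding
lemma prod_over_finset {α M : Type*} [LinearOrder α] [CommMonoid M] (s : Finset α) {c : ℕ}
    (h : s.card = c) (F : α → M) :
    ∏ x ∈ s, F x = ∏ i : Fin c, F (s.orderEmbOfFin h i) := by
  have himg : Finset.image (⇑(s.orderEmbOfFin h)) Finset.univ = s := by
    apply Finset.eq_of_subset_of_card_le
    · intro x hx
      rcases Finset.mem_image.mp hx with ⟨i, _, rfl⟩
      exact Finset.orderEmbOfFin_mem s h i
    · rw [Finset.card_image_of_injective _ (s.orderEmbOfFin h).injective]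
      simp [h]
  conv_lhs => rw [← himg]
  rw [Finset.prod_image (fun a _ b _ hab => (s.orderEmbOfFin h).injective hab)]

lemma rename_gFin_merge (d n k : ℕ) (I : Finset (Fin (n + k))) (hI : I.card = n)
    (hJ : Iᶜ.card = k) :
    rename ⇑(mergePerm I hI hJ) (gFin d n k)
      = ∏ j ∈ Iᶜ, ∏ i ∈ I, (X j - C qv * X i) ^ (d - 1) := by
  unfold gFin
  rw [map_prod]
  rw [prod_over_finset Iᶜ hJ (fun j => ∏ i ∈ I, (X j - C qv * X i) ^ (d - 1))]
  refine Finset.prod_congr rfl fun j _ => ?_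
  rw [map_prod]
  rw [prod_over_finset I hI (fun i => (X ((Iᶜ.orderEmbOfFin hJ) j) - C qv * X i) ^ (d - 1))]
  refine Finset.prod_congr rfl fun i _ => ?_
  rw [map_pow, map_sub, map_mul, rename_X, rename_X, rename_C,
    mergePerm_natAdd, mergePerm_castAdd]

lemma rename_blockPerm_gFin (d n k : ℕ) (σ : Equiv.Perm (Fin n)) (τ : Equiv.Perm (Fin k)) :
    rename ⇑(blockPerm σ τ) (gFin d n k) = gFin d n k := by
  unfold gFin
  rw [map_prod]
  rw [← Equiv.prod_comp τ (fun j => ∏ i : Fin n,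
    ((X (Fin.natAdd n j) : MvPolynomial (Fin (n+k)) (Polynomial ℚ))
      - C qv * X (Fin.castAdd k i)) ^ (d - 1))]
  refine Finset.prod_congr rfl fun j _ => ?_
  rw [map_prod]
  rw [← Equiv.prod_comp σ (fun i =>
    ((X (Fin.natAdd n (τ j)) : MvPolynomial (Fin (n+k)) (Polynomial ℚ))
      - C qv * X (Fin.castAdd k i)) ^ (d - 1))]
  refine Finset.prod_congr rfl fun i _ => ?_
  rw [map_pow, map_sub, map_mul, rename_X, rename_X, rename_C,
    blockPerm_natAdd, blockPerm_castAdd]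

lemma rename_Msym {n m : ℕ} (emb : Fin n → Fin m) (μ : Fin n → ℕ) :
    rename emb (Msym μ) = ∑ σ : Equiv.Perm (Fin n), ∏ i : Fin n,
      (X (emb (σ i)) : MvPolynomial (Fin m) (Polynomial ℚ)) ^ μ i := by
  unfold Msym
  rw [map_sum]
  refine Finset.sum_congr rfl fun σ _ => ?_
  rw [map_prod]
  simp



lemma body_eq (d n k : ℕ) (μ : Fin n → ℕ) (ν : Fin k → ℕ) (I : PSetD n k)
    (hI : I.1.card = n) (hJ : I.1ᶜ.card = k) :
    rename ⇑(I.1.orderEmbOfFin hI) (Msym μ) * rename ⇑(I.1ᶜ.orderEmbOfFin hJ) (Msym ν) *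
        ∏ j ∈ I.1ᶜ, ∏ i ∈ I.1, (X j - C qv * X i) ^ (d - 1)
      = ∑ σ : Equiv.Perm (Fin n), ∑ τ : Equiv.Perm (Fin k),
          rename ⇑(Theta n k (I, σ, τ))
            ((∏ l : Fin (n + k), X l ^ Fin.append μ ν l) * gFin d n k) := by
  have hI' : I.1.card = n := hIof I
  have hJ' : I.1ᶜ.card = k := hJof I
  have hterm : ∀ (σ : Equiv.Perm (Fin n)) (τ : Equiv.Perm (Fin k)),
      rename ⇑(Theta n k (I, σ, τ)) ((∏ l : Fin (n + k), X l ^ Fin.append μ ν l) * gFin d n k)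
        = ((∏ i : Fin n, X ((I.1.orderEmbOfFin hI') (σ i)) ^ μ i) *
            ∏ j : Fin k, X ((I.1ᶜ.orderEmbOfFin hJ') (τ j)) ^ ν j) *
          ∏ j ∈ I.1ᶜ, ∏ i ∈ I.1, (X j - C qv * X i) ^ (d - 1) := by
    intro σ τ
    have hcoe : ⇑(Theta n k (I, σ, τ))
        = ⇑(mergePerm I.1 hI' hJ') ∘ ⇑(blockPerm σ τ) := rfl
    have hg : rename (⇑(mergePerm I.1 hI' hJ') ∘ ⇑(blockPerm σ τ)) (gFin d n k)
        = ∏ j ∈ I.1ᶜ, ∏ i ∈ I.1, (X j - C qv * X i) ^ (d - 1) := by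
      rw [← rename_rename, rename_blockPerm_gFin, rename_gFin_merge]
    rw [hcoe, map_mul, hg]
    congr 1
    rw [map_prod]
    rw [Fin.prod_univ_add (f := fun l => rename (⇑(mergePerm I.1 hI' hJ') ∘ ⇑(blockPerm σ τ))
        ((X l : MvPolynomial (Fin (n + k)) (Polynomial ℚ)) ^ Fin.append μ ν l))]
    congr 1
    · refine Finset.prod_congr rfl fun i _ => ?_
      rw [map_pow, rename_X]
      simp only [Function.comp_apply, blockPerm_castAdd, mergePerm_castAdd, Fin.append_left]
    · refine Finset.prod_congr rfl fun j _ => ?_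
      rw [map_pow, rename_X]
      simp only [Function.comp_apply, blockPerm_natAdd, mergePerm_natAdd, Fin.append_right]
  rw [Finset.sum_congr rfl (fun σ _ => Finset.sum_congr rfl fun τ _ => hterm σ τ)]
  rw [rename_Msym, rename_Msym, Finset.sum_mul_sum]
  rw [Finset.sum_mul]
  refine Finset.sum_congr rfl fun σ _ => ?_
  rw [Finset.sum_mul]

lemma B_expand (d n k : ℕ) (μ : Fin n → ℕ) (ν : Fin k → ℕ) :
    (∏ l : Fin (n + k), (X l : MvPolynomial (Fin (n + k)) (Polynomial ℚ)) ^ Fin.append μ ν l)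
        * gFin d n k
      = ∑ e ∈ (gFin d n k).support, coeff e (gFin d n k) •
          ∏ l : Fin (n + k), (X l : MvPolynomial (Fin (n + k)) (Polynomial ℚ))
            ^ (Fin.append μ ν l + e l) := by
  conv_lhs => rw [(gFin d n k).as_sum]
  rw [Finset.mul_sum]
  refine Finset.sum_congr rfl fun e he => ?_
  have h1 : (monomial e) (coeff e (gFin d n k)) = coeff e (gFin d n k) • (monomial e) 1 := by
    rw [MvPolynomial.smul_monomial, smul_eq_mul, mul_one]
  rw [h1, mul_smul_comm]
  congr 1
  have h2 : ((monomial e) 1 : MvPolynomial (Fin (n + k)) (Polynomial ℚ))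
      = ∏ l : Fin (n + k), (X l : MvPolynomial (Fin (n + k)) (Polynomial ℚ)) ^ e l := by
    rw [prod_X_pow_fin ⇑e, Finsupp.equivFunOnFinite_symm_coe]
  rw [h2, ← Finset.prod_mul_distrib]
  refine Finset.prod_congr rfl fun l _ => ?_
  rw [pow_add]

lemma sum_theta (n k : ℕ) {M : Type*} [AddCommMonoid M]
    (F : Equiv.Perm (Fin (n + k)) → M) :
    ∑ I : PSetD n k, ∑ σ : Equiv.Perm (Fin n), ∑ τ : Equiv.Perm (Fin k),
        F (Theta n k (I, σ, τ))
      = ∑ π : Equiv.Perm (Fin (n + k)), F π := by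
  rw [← Function.Bijective.sum_comp (Theta_bijective n k) F]
  rw [Fintype.sum_prod_type]
  exact Finset.sum_congr rfl fun I _ =>
    (Fintype.sum_prod_type (fun y : Equiv.Perm (Fin n) × Equiv.Perm (Fin k) =>
      F (Theta n k (I, y)))).symm

theorem mult (d n k : ℕ) (μ : Fin n → ℕ) (ν : Fin k → ℕ) :
    shuffle d n k (Msym μ) (Msym ν)
      = ∑ e ∈ (gFin d n k).support,
          MvPolynomial.coeff e (gFin d n k) •
            Msym (Fin.append (fun i => μ i + e (Fin.castAdd k i))
                    (fun j => ν j + e (Fin.natAdd n j)) ∘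
                  Tuple.sort (Fin.append (fun i => μ i + e (Fin.castAdd k i))
                    (fun j => ν j + e (Fin.natAdd n j)))) := by
  set B := (∏ l : Fin (n + k), (X l : MvPolynomial (Fin (n + k)) (Polynomial ℚ))
    ^ Fin.append μ ν l) * gFin d n k with hB
  have hren : ∀ π : Equiv.Perm (Fin (n + k)), rename ⇑π B
      = ∑ e ∈ (gFin d n k).support, coeff e (gFin d n k) •
          ∏ l : Fin (n + k), (X (π l) : MvPolynomial (Fin (n + k)) (Polynomial ℚ))
            ^ (Fin.append μ ν l + e l) := by
    intro π
    rw [hB, B_expand, map_sum]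
    refine Finset.sum_congr rfl fun e _ => ?_
    rw [AlgHom.map_smul_of_tower, map_prod]
    simp only [map_pow, rename_X]
  calc shuffle d n k (Msym μ) (Msym ν)
      = ∑ I ∈ ((Finset.univ : Finset (Fin (n + k))).powersetCard n).attach,
          ∑ σ : Equiv.Perm (Fin n), ∑ τ : Equiv.Perm (Fin k),
            rename ⇑(Theta n k (I, σ, τ)) B := by
        unfold shuffle
        refine Finset.sum_congr rfl fun I _ => ?_
        exact body_eq d n k μ ν I _ _
    _ = ∑ π : Equiv.Perm (Fin (n + k)), rename ⇑π B := by
        rw [← Finset.univ_eq_attach]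
        exact sum_theta n k (fun π => rename ⇑π B)
    _ = ∑ π : Equiv.Perm (Fin (n + k)), ∑ e ∈ (gFin d n k).support,
          coeff e (gFin d n k) •
            ∏ l : Fin (n + k), (X (π l) : MvPolynomial (Fin (n + k)) (Polynomial ℚ))
              ^ (Fin.append μ ν l + e l) := Finset.sum_congr rfl fun π _ => hren π
    _ = ∑ e ∈ (gFin d n k).support, ∑ π : Equiv.Perm (Fin (n + k)),
          coeff e (gFin d n k) •
            ∏ l : Fin (n + k), (X (π l) : MvPolynomial (Fin (n + k)) (Polynomial ℚ))
              ^ (Fin.append μ ν l + e l) := Finset.sum_comm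
    _ = ∑ e ∈ (gFin d n k).support,
          MvPolynomial.coeff e (gFin d n k) •
            Msym (Fin.append (fun i => μ i + e (Fin.castAdd k i))
                    (fun j => ν j + e (Fin.natAdd n j)) ∘
                  Tuple.sort (Fin.append (fun i => μ i + e (Fin.castAdd k i))
                    (fun j => ν j + e (Fin.natAdd n j)))) := by
        refine Finset.sum_congr rfl fun e _ => ?_
        rw [← Finset.smul_sum]
        congr 1
        have hw : Fin.append (fun i => μ i + e (Fin.castAdd k i))
              (fun j => ν j + e (Fin.natAdd n j))
            = fun l => Fin.append μ ν l + e l := by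
          funext l
          induction l using Fin.addCases with
          | left i => simp [Fin.append_left]
          | right j => simp [Fin.append_right]
        rw [Msym_comp_perm, hw]
        rfl

/-- Theorem 4.7: `Φ : 𝔸^d_q(Λ) → ℋ^d_q` is an algebra isomorphism.  In each
degree `Φ` is a linear isomorphism onto the symmetric polynomials, and it is
multiplicative:
`M_μ * M_ν = ∑_{a,b} c_{n,k}^{a,b} M_{(μ+a, ν+b)_≤}` (the sum over `a ∈ ℕ^n`,
`b ∈ ℕ^k` being realised as a sum over the monomials `e` of `g_{n,k}`, with
`a i = e i` and `b j = e (n+j)`). -/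
theorem Phi_algebra_isomorphism (d : ℕ) (hd : 0 < d) :
    (∀ n : ℕ, Function.Injective (Phi n)) ∧
    (∀ n : ℕ, Set.range (Phi n) = {f : MvPolynomial (Fin n) (Polynomial ℚ) | f.IsSymmetric}) ∧
    (∀ (n k : ℕ) (μ : Fin n → ℕ) (ν : Fin k → ℕ), Monotone μ → Monotone ν →
      shuffle d n k (Msym μ) (Msym ν)
        = ∑ e ∈ (gFin d n k).support,
            MvPolynomial.coeff e (gFin d n k) •
              Msym (Fin.append (fun i => μ i + e (Fin.castAdd k i))
                      (fun j => ν j + e (Fin.natAdd n j)) ∘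
                    Tuple.sort (Fin.append (fun i => μ i + e (Fin.castAdd k i))
                      (fun j => ν j + e (Fin.natAdd n j))))) := by
  refine ⟨Phi_injective, Phi_range, ?_⟩
  intro n k μ ν hμ hν
  exact mult d n k μ ν

end
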